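/- Let t ≥ 2 be an integer and suppose α, β are real numbers with 0 ≤ α < β ≤ 3/(t+1) and g(α) = g(β). Then α + β ≥ 4/(t+1); equivalently, 2 − (t+1)α ≤ (t+1)β − 2. -/

import Mathlib

/-- `g` is the derivative of `ρ ↦ ρ(1-ρ)^t`. -/
noncomputable def gfun (t : ℕ) (ρ : ℝ) : ℝ := (1 - ρ) ^ (t - 1) * (1 - ((t : ℝ) + 1) * ρ)

lemma gfun_hasDerivAt (t : ℕ) (ht : 2 ≤ t) (ρ : ℝ) :
    HasDerivAt (gfun t) (-(t:ℝ) * (1-ρ)^(t-2) * (2 - ((t:ℝ)+1)*ρ)) ρ := by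
  have h1 : HasDerivAt (fun x : ℝ => 1 - x) (-1) ρ := by
    simpa using (hasDerivAt_id ρ).const_sub 1
  have h2 := h1.pow (t-1)
  have h3 : HasDerivAt (fun x : ℝ => 1 - ((t:ℝ)+1) * x) (-((t:ℝ)+1)) ρ := by
    simpa using ((hasDerivAt_id ρ).const_mul ((t:ℝ)+1)).const_sub 1
  have h4 := h2.mul h3
  have : gfun t = fun x : ℝ => (1-x)^(t-1) * (1 - ((t:ℝ)+1)*x) := rfl
  rw [this]
  convert h4 using 1
  · rfl
  · rfl
  · rfl
  have e1 : t - 1 - 1 = t - 2 := by omega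
  have e2 : t - 1 = (t-2) + 1 := by omega
  have e3 : ((t - 1 : ℕ) : ℝ) = (t:ℝ) - 1 := by
    rw [Nat.cast_sub (by omega : 1 ≤ t)]; norm_num
  rw [e1, e3]
  rw [e2, pow_succ]
  simp only [Pi.mul_apply, Pi.pow_apply]
  ring

lemma gfun_strictAntiOn (t : ℕ) (ht : 2 ≤ t) :
    StrictAntiOn (gfun t) (Set.Icc 0 (2/((t:ℝ)+1))) := by
  have hc : (0:ℝ) < (t:ℝ)+1 := by positivity
  apply strictAntiOn_of_deriv_neg (convex_Icc _ _)
  · exact fun x _ => ((gfun_hasDerivAt t ht x).differentiableAt).continuousAt.continuousWithinAt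
  · intro x hx
    rw [interior_Icc] at hx
    rw [(gfun_hasDerivAt t ht x).deriv]
    have hx1 : x < 1 := lt_of_lt_of_le hx.2 (by
      rw [div_le_one hc]
      have : (2:ℝ) ≤ (t:ℝ) := by exact_mod_cast ht
      linarith)
    have h1 : (0:ℝ) < (1-x)^(t-2) := pow_pos (by linarith) _
    have h2 : (0:ℝ) < 2 - ((t:ℝ)+1)*x := by
      have := hx.2
      rw [lt_div_iff₀ hc] at this
      linarith [this]
    have h3 : (0:ℝ) < (t:ℝ) := by
      have : (2:ℝ) ≤ (t:ℝ) := by exact_mod_cast ht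
      linarith
    nlinarith [mul_pos (mul_pos h3 h1) h2]

lemma gfun_sym (t : ℕ) (ht : 2 ≤ t) (h : ℝ) (hh0 : 0 ≤ h) (hh1 : h ≤ 1/((t:ℝ)+1)) :
    gfun t (2/((t:ℝ)+1) + h) ≤ gfun t (2/((t:ℝ)+1) - h) := by
  have hc : (0:ℝ) < (t:ℝ)+1 := by positivity
  have ht' : (2:ℝ) ≤ (t:ℝ) := by exact_mod_cast ht
  set s : ℝ := 2/((t:ℝ)+1) with hs
  set D : ℝ → ℝ := fun x => gfun t (s - x) - gfun t (s + x) with hD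
  have hDd : ∀ x : ℝ, HasDerivAt D
      ((t:ℝ)*((t:ℝ)+1)*x*((1-s+x)^(t-2) - (1-s-x)^(t-2))) x := by
    intro x
    have d1 : HasDerivAt (fun y : ℝ => s - y) (-1) x := by
      simpa using (hasDerivAt_id x).const_sub s
    have d2 : HasDerivAt (fun y : ℝ => s + y) 1 x := by
      simpa using (hasDerivAt_id x).const_add s
    have g1 := (gfun_hasDerivAt t ht (s - x)).comp x d1
    have g2 := (gfun_hasDerivAt t ht (s + x)).comp x d2
    have := g1.sub g2
    convert this using 1
    · rfl
    · rfl
    · rfl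
    have hcs : ((t:ℝ)+1) * s = 2 := by
      rw [hs]; field_simp
    have e1 : 2 - ((t:ℝ)+1)*(s-x) = ((t:ℝ)+1)*x := by rw [mul_sub, hcs]; ring
    have e2 : 2 - ((t:ℝ)+1)*(s+x) = -(((t:ℝ)+1)*x) := by rw [mul_add, hcs]; ring
    rw [e1, e2]
    have e3 : 1 - (s - x) = 1 - s + x := by ring
    have e4 : 1 - (s + x) = 1 - s - x := by ring
    rw [e3, e4]
    ring
  have hmono : MonotoneOn D (Set.Icc 0 (1/((t:ℝ)+1))) := by
    apply monotoneOn_of_deriv_nonneg (convex_Icc _ _)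
    · exact fun x _ => ((hDd x).differentiableAt).continuousAt.continuousWithinAt
    · exact fun x _ => ((hDd x).differentiableAt).differentiableWithinAt
    · intro x hx
      rw [interior_Icc] at hx
      rw [(hDd x).deriv]
      have hax : 0 ≤ 1 - s - x := by
        have : x ≤ 1/((t:ℝ)+1) := le_of_lt hx.2
        have h31 : (2:ℝ)/((t:ℝ)+1) + 1/((t:ℝ)+1) ≤ 1 := by
          rw [← add_div, div_le_one hc]; linarith
        have := hx.2
        rw [hs]; linarith
      have hpow : (1-s-x)^(t-2) ≤ (1-s+x)^(t-2) := by
        apply pow_le_pow_left₀ hax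
        linarith [hx.1]
      have hx0 : 0 ≤ x := le_of_lt hx.1
      have htn : (0:ℝ) ≤ (t:ℝ) := by linarith
      have hfac : 0 ≤ (t:ℝ)*((t:ℝ)+1)*x := mul_nonneg (mul_nonneg htn (le_of_lt hc)) hx0
      exact mul_nonneg hfac (sub_nonneg.2 hpow)
  have h0m : (0:ℝ) ∈ Set.Icc (0:ℝ) (1/((t:ℝ)+1)) := by
    constructor <;> positivity
  have hhm : h ∈ Set.Icc (0:ℝ) (1/((t:ℝ)+1)) := ⟨hh0, hh1⟩
  have := hmono h0m hhm hh0
  simp only [hD, sub_zero, add_zero] at this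
  linarith

/-- Lemma 3.8: if `0 ≤ α < β ≤ 3/(t+1)` and `g(α) = g(β)` then `α + β ≥ 4/(t+1)`. -/
theorem sym_lemma (t : ℕ) (ht : 2 ≤ t) (α β : ℝ)
    (h0 : 0 ≤ α) (hab : α < β) (hb : β ≤ 3 / ((t : ℝ) + 1))
    (hg : gfun t α = gfun t β) :
    4 / ((t : ℝ) + 1) ≤ α + β := by
  have hc : (0:ℝ) < (t:ℝ)+1 := by positivity
  set s : ℝ := 2/((t:ℝ)+1) with hs
  by_contra hcon
  push_neg at hcon
  have h42 : (4:ℝ)/((t:ℝ)+1) = 2*s := by rw [hs]; ring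
  rw [h42] at hcon
  have hβs : s < β := by
    by_contra hβs
    push_neg at hβs
    have hA : α ∈ Set.Icc (0:ℝ) s := ⟨h0, by linarith⟩
    have hB : β ∈ Set.Icc (0:ℝ) s := ⟨by linarith, hβs⟩
    have := gfun_strictAntiOn t ht hA hB hab
    rw [hg] at this
    exact lt_irrefl _ this
  set h : ℝ := β - s with hh
  have hh0 : 0 ≤ h := by rw [hh]; linarith
  have hh1 : h ≤ 1/((t:ℝ)+1) := by
    rw [hh, hs]
    have : (3:ℝ)/((t:ℝ)+1) = 2/((t:ℝ)+1) + 1/((t:ℝ)+1) := by ring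
    linarith [this ▸ hb]
  have hsym := gfun_sym t ht h hh0 hh1
  have e1 : 2/((t:ℝ)+1) + h = β := by rw [hh, hs]; ring
  have e2 : 2/((t:ℝ)+1) - h = 2*s - β := by rw [hh, hs]; ring
  rw [e1, e2] at hsym
  have hA : α ∈ Set.Icc (0:ℝ) s := ⟨h0, by linarith⟩
  have hB : 2*s - β ∈ Set.Icc (0:ℝ) s := ⟨by linarith, by linarith⟩
  have hlt : α < 2*s - β := by linarith
  have := gfun_strictAntiOn t ht hA hB hlt
  rw [hg] at this
  linarith
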